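/- Adding a weakest significant player decreases the aggregate Nash-equilibrium utility: let k ≥ 1, let w₁, …, w_k > 0 with S := ∑_{i=1}^{k} wᵢ and S − (k−1) w_m > 0 for every m (all players significant), and let w be a real with w ≥ w_m for all m and S + w − kw > 0. Then ∑_{m=1}^{k} ((S + w − k w_m)/(S + w))² + ((S + (1−k) w)/(S + w))² ≤ ∑_{m=1}^{k} ((S − (k−1) w_m)/S)². -/

import Mathlib

/-- Adding a weakest significant player decreases the aggregate Nash-equilibrium
utility: let `k ≥ 1`, `w₁, …, w_k > 0` with `S = ∑ wᵢ` and `S − (k−1)wₘ > 0` for every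
`m` (all players significant), and let `w ≥ wₘ` for all `m` with `S + w − kw > 0`.  Then
`∑ₘ ((S + w − k wₘ)/(S + w))² + ((S + (1−k) w)/(S + w))² ≤ ∑ₘ ((S − (k−1) wₘ)/S)²`. -/
theorem adding_weakest_player_decreases_sum_utility (k : ℕ) (hk : 1 ≤ k)
    (w : Fin k → ℝ) (hw : ∀ m, 0 < w m) (wnew : ℝ)
    (hsig : ∀ m, 0 < (∑ i, w i) - ((k : ℝ) - 1) * w m)
    (hge : ∀ m, w m ≤ wnew)
    (hnewsig : 0 < (∑ i, w i) + wnew - (k : ℝ) * wnew) :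
    (∑ m, (((∑ i, w i) + wnew - (k : ℝ) * w m) / ((∑ i, w i) + wnew)) ^ 2) +
        (((∑ i, w i) + (1 - (k : ℝ)) * wnew) / ((∑ i, w i) + wnew)) ^ 2 ≤
      ∑ m, (((∑ i, w i) - ((k : ℝ) - 1) * w m) / (∑ i, w i)) ^ 2 := by
  have hne : Nonempty (Fin k) := ⟨⟨0, hk⟩⟩
  set S : ℝ := ∑ i, w i with hSdef
  set Q : ℝ := ∑ i, (w i) ^ 2 with hQdef
  have hS : 0 < S := Finset.sum_pos (fun i _ => hw i) Finset.univ_nonempty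
  have hwnew : 0 < wnew := lt_of_lt_of_le (hw ⟨0, hk⟩) (hge ⟨0, hk⟩)
  have hT : 0 < S + wnew := by linarith
  have hk1 : (1 : ℝ) ≤ (k : ℝ) := by exact_mod_cast hk
  have hQ : Q ≤ wnew * S := by
    rw [hQdef, hSdef, Finset.mul_sum]
    exact Finset.sum_le_sum fun i _ => by
      have := hw i; have := hge i; nlinarith
  have e0 : ∑ m, (S + wnew - (k : ℝ) * w m) ^ 2
      = (k : ℝ) * (S + wnew) ^ 2 - 2 * k * (S + wnew) * S + (k : ℝ) ^ 2 * Q := by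
    have h : ∀ m : Fin k, (S + wnew - (k : ℝ) * w m) ^ 2
        = (S + wnew) ^ 2 - 2 * (k : ℝ) * (S + wnew) * w m + (k : ℝ) ^ 2 * (w m) ^ 2 :=
      fun m => by ring
    rw [Finset.sum_congr rfl fun m _ => h m, Finset.sum_add_distrib,
      Finset.sum_sub_distrib, Finset.sum_const, ← Finset.mul_sum, ← Finset.mul_sum,
      Finset.card_univ, Fintype.card_fin, nsmul_eq_mul, ← hSdef, ← hQdef]
  have e1 : ∑ m, (S - ((k : ℝ) - 1) * w m) ^ 2
      = (k : ℝ) * S ^ 2 - 2 * ((k : ℝ) - 1) * S * S + ((k : ℝ) - 1) ^ 2 * Q := by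
    have h : ∀ m : Fin k, (S - ((k : ℝ) - 1) * w m) ^ 2
        = S ^ 2 - 2 * ((k : ℝ) - 1) * S * w m + ((k : ℝ) - 1) ^ 2 * (w m) ^ 2 :=
      fun m => by ring
    rw [Finset.sum_congr rfl fun m _ => h m, Finset.sum_add_distrib,
      Finset.sum_sub_distrib, Finset.sum_const, ← Finset.mul_sum, ← Finset.mul_sum,
      Finset.card_univ, Fintype.card_fin, nsmul_eq_mul, ← hSdef, ← hQdef]
  simp_rw [div_pow, ← Finset.sum_div]
  rw [e0, e1, ← add_div, div_le_div_iff₀ (by positivity) (by positivity)]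
  have hD : 0 < S - ((k : ℝ) - 1) * wnew := by linarith
  have h1 : 0 ≤ (S - ((k : ℝ) - 1) * wnew) * (wnew * S - Q)
      * (((k : ℝ) - 1) * (S + wnew) + (k : ℝ) * S) := by
    apply mul_nonneg (mul_nonneg hD.le (by linarith))
    nlinarith
  have h2 : 0 ≤ (S - ((k : ℝ) - 1) * wnew) ^ 2 * S * (S + wnew) := by positivity
  nlinarith [h1, h2, sq_nonneg (S + wnew), sq_nonneg S]
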